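/- Let t = 2^a · u with u odd, and write the prime factorization u = p₁^{s₁} ⋯ p_n^{s_n}. Then the union T_{2t} := ⋃_{m | t} T_{2t,m} has cardinality |T_{2t}| = Σ_{l=0}^{a} 2^{2^l · u}. -/

import Mathlib

namespace Stmt8

def e (b : Bool) : ℤ := if b then 1 else -1

lemma e_pm (b : Bool) : e b = 1 ∨ e b = -1 := by cases b <;> simp [e]

lemma e_inj : Function.Injective e := by
  intro a b h; cases a <;> cases b <;> simp_all [e]

lemma e_decide {x : ℤ} (hx : x = 1 ∨ x = -1) : e (decide (x = 1)) = x := by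
  rcases hx with h | h <;> simp [e, h]

set_option linter.unusedSectionVars false

variable {n : ℕ} [NeZero n]

lemma iter {m : ℕ} {α : ZMod n → ℤ} (h : ∀ i, α ((m : ZMod n) + i) = -α i) :
    ∀ (k : ℕ) (i : ZMod n), α ((m * k : ℕ) + i) = (-1) ^ k * α i := by
  intro k
  induction k with
  | zero => intro i; simp
  | succ k ih =>
    intro i
    have h1 : ((m * (k + 1) : ℕ) : ZMod n) + i
        = (m : ZMod n) + (((m * k : ℕ) : ZMod n) + i) := by
      push_cast; ring
    rw [h1, h, ih]; ring

/-- constructed sequence from a choice of signs on `Fin m`. -/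
def ctor (m : ℕ) (hm : 0 < m) (f : Fin m → Bool) : ZMod n → ℤ :=
  fun x => e (f ⟨x.val % m, Nat.mod_lt _ hm⟩) * (-1) ^ (x.val / m)

lemma ctor_pm1 (m : ℕ) (hm : 0 < m) (f : Fin m → Bool) (i : ZMod n) :
    ctor m hm f i = 1 ∨ ctor m hm f i = -1 := by
  unfold ctor
  rcases e_pm (f ⟨i.val % m, Nat.mod_lt _ hm⟩) with h | h <;>
    rcases Nat.even_or_odd (i.val / m) with hq | hq <;>
      rw [h] <;> simp [hq.neg_one_pow]

lemma ctor_ap (m c : ℕ) (hm : 0 < m) (hn : n = m * c) (hc : Even c)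
    (f : Fin m → Bool) (i : ZMod n) :
    ctor m hm f ((m : ZMod n) + i) = -ctor m hm f i := by
  have hn0 : 0 < n := Nat.pos_of_ne_zero (NeZero.ne n)
  have hcne : c ≠ 0 := by
    rintro rfl
    rw [Nat.mul_zero] at hn
    omega
  have hc2 : 2 ≤ c := by
    rcases hc with ⟨d, hd⟩
    omega
  have hmc2 : m * 2 ≤ m * c := Nat.mul_le_mul_left m hc2
  have hmn : m < n := by
    have : m * 2 = m + m := by ring
    omega
  set v := i.val with hv
  have hvlt : v < n := i.val_lt
  set q := v / m with hq
  set r := v % m with hr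
  have hrlt : r < m := Nat.mod_lt _ hm
  have hvd : v = m * q + r := (Nat.div_add_mod v m).symm
  have hval : ((m : ZMod n) + i).val = (m + v) % n := by
    rw [ZMod.val_add, ZMod.val_cast_of_lt hmn]
  have eq1 : m * (q + 1) = m * q + m := by ring
  unfold ctor
  simp only [hval]
  by_cases hcase : m + v < n
  · simp only [Nat.mod_eq_of_lt hcase]
    have h1 : (m + v) % m = r := by
      rw [show m + v = m * (q + 1) + r by omega, Nat.mul_add_mod,
        Nat.mod_eq_of_lt hrlt]
    have h2 : (m + v) / m = q + 1 := by
      rw [show m + v = m * (q + 1) + r by omega, Nat.mul_add_div hm,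
        Nat.div_eq_of_lt hrlt]
    simp only [h1, h2]
    rw [pow_succ]
    ring
  · have hlt2 : m + v - n < n := by omega
    have hmod : (m + v) % n = m + v - n := by
      rw [Nat.mod_eq_sub_mod (by omega), Nat.mod_eq_of_lt hlt2]
    have eq2 : m * (q + 2) = m * q + m + m := by ring
    have hqc : c ≤ q + 1 := by
      have hlt : m * c < m * (q + 2) := by omega
      have := Nat.lt_of_mul_lt_mul_left hlt
      omega
    have eq3 : m * (q + 1 - c) + m * c = m * (q + 1) := by
      rw [← Nat.mul_add]
      congr 1
      omega
    have hsub : m + v - n = m * (q + 1 - c) + r := by omega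
    have h1 : (m + v - n) % m = r := by
      rw [hsub, Nat.mul_add_mod, Nat.mod_eq_of_lt hrlt]
    have h2 : (m + v - n) / m = q + 1 - c := by
      rw [hsub, Nat.mul_add_div hm, Nat.div_eq_of_lt hrlt]
      omega
    simp only [hmod, h1, h2]
    have hpow : ((-1 : ℤ)) ^ (q + 1 - c) = -(-1 : ℤ) ^ q := by
      have h3 : ((-1 : ℤ)) ^ (q + 1 - c) * (-1) ^ c = (-1) ^ (q + 1) := by
        rw [← pow_add]; congr 1; omega
      rw [hc.neg_one_pow, mul_one] at h3
      rw [h3, pow_succ]; ring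
    rw [hpow]
    ring

lemma ctor_restrict (m : ℕ) (hm : 0 < m) (hmn : m < n) (f : Fin m → Bool) (r : Fin m) :
    ctor m hm f ((r.val : ℕ) : ZMod n) = e (f r) := by
  unfold ctor
  have h1 : ((r.val : ℕ) : ZMod n).val = r.val := ZMod.val_cast_of_lt (lt_trans r.isLt hmn)
  simp only [h1, Nat.mod_eq_of_lt r.isLt, Nat.div_eq_of_lt r.isLt]
  simp

lemma ap_contradiction {α : ZMod n → ℤ} (hpm : ∀ i, α i = 1 ∨ α i = -1)
    {m k : ℕ} (hk : Even k)
    (h1 : ∀ i, α ((m : ZMod n) + i) = -α i)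
    (h2 : ∀ i, α (((m * k : ℕ) : ZMod n) + i) = -α i) : False := by
  have := iter h1 k 0
  rw [h2 0, hk.neg_one_pow, one_mul] at this
  rcases hpm 0 with h | h <;> rw [h] at this <;> omega

lemma pow_ap_absurd {α : ZMod n → ℤ} (hpm : ∀ i, α i = 1 ∨ α i = -1)
    {u l1 l2 : ℕ} (hl : l1 < l2)
    (h1 : ∀ i, α (((2 ^ l1 * u : ℕ) : ZMod n) + i) = -α i)
    (h2 : ∀ i, α (((2 ^ l2 * u : ℕ) : ZMod n) + i) = -α i) : False := by
  have hk : Even (2 ^ (l2 - l1)) := (Nat.even_pow).mpr ⟨even_two, by omega⟩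
  refine ap_contradiction hpm hk h1 ?_
  have hfac : 2 ^ l1 * u * 2 ^ (l2 - l1) = 2 ^ l2 * u := by
    rw [mul_right_comm, ← pow_add]
    congr 2
    omega
  rw [hfac]
  exact h2

lemma ap_pow_unique {α : ZMod n → ℤ} (hpm : ∀ i, α i = 1 ∨ α i = -1)
    {u l1 l2 : ℕ}
    (h1 : ∀ i, α (((2 ^ l1 * u : ℕ) : ZMod n) + i) = -α i)
    (h2 : ∀ i, α (((2 ^ l2 * u : ℕ) : ZMod n) + i) = -α i) : l1 = l2 := by
  rcases lt_trichotomy l1 l2 with h | h | h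
  · exact absurd (pow_ap_absurd hpm h h1 h2) (by simp)
  · exact h
  · exact absurd (pow_ap_absurd hpm h h2 h1) (by simp)

end Stmt8

open Stmt8 in
/-- Write `t = 2^a · u` with `u` odd.  Then the union
`T_{2t} = ⋃_{m ∣ t} T_{2t,m}` of the sets of anti-periodic `±1` sequences has
cardinality `Σ_{l=0}^{a} 2^{2^l · u}`. -/
theorem stmt8 (t a u : ℕ) (ht : 1 ≤ t) (hu : Odd u) (htf : t = 2 ^ a * u) :
    Nat.card {α : ZMod (2 * t) → ℤ //
      (∀ i, α i = 1 ∨ α i = -1) ∧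
      ∃ m : ℕ, m ∣ t ∧ ∀ i, α ((m : ZMod (2 * t)) + i) = -α i}
      = ∑ l ∈ Finset.range (a + 1), 2 ^ (2 ^ l * u) := by
  haveI : NeZero (2 * t) := ⟨by omega⟩
  have hu0 : 0 < u := hu.pos
  have hu2 : ¬ 2 ∣ u := by
    rw [Nat.two_dvd_ne_zero, ← Nat.odd_iff]
    exact hu
  have hM0 : ∀ l : ℕ, 0 < 2 ^ l * u :=
    fun l => Nat.mul_pos (Nat.pow_pos (by norm_num)) hu0
  have hMdvd : ∀ l : ℕ, l ≤ a → 2 ^ l * u ∣ t := by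
    intro l hl
    rw [htf]
    exact Nat.mul_dvd_mul_right (pow_dvd_pow 2 hl) u
  have hMfac : ∀ l : ℕ, l ≤ a → 2 * t = (2 ^ l * u) * 2 ^ (a + 1 - l) := by
    intro l hl
    rw [htf, mul_right_comm, ← pow_add]
    have : l + (a + 1 - l) = a + 1 := by omega
    rw [this, pow_succ]
    ring
  have hMeven : ∀ l : ℕ, l ≤ a → Even (2 ^ (a + 1 - l)) :=
    fun l hl => (Nat.even_pow).mpr ⟨even_two, by omega⟩
  have hMlt : ∀ l : ℕ, l ≤ a → 2 ^ l * u < 2 * t := by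
    intro l hl
    have h1 : 2 ^ l * u ≤ t := Nat.le_of_dvd (by omega) (hMdvd l hl)
    omega
  set F : (Σ l : Fin (a + 1), (Fin (2 ^ (l : ℕ) * u) → Bool)) →
      {α : ZMod (2 * t) → ℤ //
        (∀ i, α i = 1 ∨ α i = -1) ∧
        ∃ m : ℕ, m ∣ t ∧ ∀ i, α ((m : ZMod (2 * t)) + i) = -α i} :=
    fun p => ⟨ctor (2 ^ (p.1 : ℕ) * u) (hM0 _) p.2,
      fun i => ctor_pm1 _ _ _ i,
      ⟨2 ^ (p.1 : ℕ) * u, hMdvd _ (by omega),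
        fun i => ctor_ap (n := 2 * t) (2 ^ (p.1 : ℕ) * u) (2 ^ (a + 1 - (p.1 : ℕ)))
            (hM0 _) (hMfac _ (by omega)) (hMeven _ (by omega)) p.2 i⟩⟩
    with hF
  have hbij : Function.Bijective F := by
    constructor
    · rintro ⟨l1, f1⟩ ⟨l2, f2⟩ hEq
      have hfun : ctor (n := 2 * t) (2 ^ (l1 : ℕ) * u) (hM0 _) f1
          = ctor (n := 2 * t) (2 ^ (l2 : ℕ) * u) (hM0 _) f2 := by
        have := congrArg Subtype.val hEq
        simpa [hF] using this
      have hpm : ∀ i, ctor (n := 2 * t) (2 ^ (l1 : ℕ) * u) (hM0 _) f1 i = 1 ∨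
          ctor (n := 2 * t) (2 ^ (l1 : ℕ) * u) (hM0 _) f1 i = -1 :=
        fun i => ctor_pm1 _ _ _ i
      have hap1 : ∀ i, ctor (n := 2 * t) (2 ^ (l1 : ℕ) * u) (hM0 _) f1
          (((2 ^ (l1 : ℕ) * u : ℕ) : ZMod (2 * t)) + i)
          = -ctor (2 ^ (l1 : ℕ) * u) (hM0 _) f1 i := by
        intro i
        exact ctor_ap (n := 2 * t) (2 ^ (l1 : ℕ) * u) (2 ^ (a + 1 - (l1 : ℕ)))
          (hM0 _) (hMfac _ (by omega)) (hMeven _ (by omega)) f1 i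
      have hap2 : ∀ i, ctor (n := 2 * t) (2 ^ (l1 : ℕ) * u) (hM0 _) f1
          (((2 ^ (l2 : ℕ) * u : ℕ) : ZMod (2 * t)) + i)
          = -ctor (2 ^ (l1 : ℕ) * u) (hM0 _) f1 i := by
        intro i
        rw [hfun]
        exact ctor_ap (n := 2 * t) (2 ^ (l2 : ℕ) * u) (2 ^ (a + 1 - (l2 : ℕ)))
          (hM0 _) (hMfac _ (by omega)) (hMeven _ (by omega)) f2 i
      have hl : l1 = l2 := by
        ext
        exact ap_pow_unique hpm hap1 hap2
      subst hl
      have hf : f1 = f2 := by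
        funext r
        apply e_inj
        rw [← ctor_restrict _ (hM0 _) (hMlt _ (by omega)) f1 r,
          ← ctor_restrict _ (hM0 _) (hMlt _ (by omega)) f2 r, hfun]
      rw [hf]
    · rintro ⟨α, hpm, m, hmt, hap⟩
      have hm0 : m ≠ 0 := by
        rintro rfl
        rw [Nat.zero_dvd] at hmt
        omega
      obtain ⟨l, v, hv2, hmv⟩ := Nat.exists_eq_pow_mul_and_not_dvd hm0 2 (by norm_num)
      have hvodd : Nat.Coprime v 2 :=
        Nat.coprime_two_right.mpr (Nat.odd_iff.mpr (by omega))
      have hmt' : m ∣ 2 ^ a * u := htf ▸ hmt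
      have hvu : v ∣ u := by
        refine (hvodd.pow_right a).dvd_of_dvd_mul_left ?_
        exact dvd_trans ⟨2 ^ l, by rw [hmv]; ring⟩ hmt'
      have hv0 : 0 < v := by
        rcases Nat.eq_zero_or_pos v with h0 | h0
        · subst h0; simp at hmv; omega
        · exact h0
      have hla : l ≤ a := by
        have h2u : Nat.Coprime (2 ^ l) u :=
          Nat.Coprime.pow_left l (Nat.coprime_two_left.mpr hu)
        have hdl : 2 ^ l ∣ 2 ^ a := by
          refine h2u.dvd_of_dvd_mul_right ?_
          exact dvd_trans ⟨v, hmv⟩ hmt'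
        exact (Nat.pow_dvd_pow_iff_le_right (by norm_num)).mp hdl
      have hquod : Odd (u / v) := by
        rw [Nat.odd_iff, ← Nat.two_dvd_ne_zero]
        intro h2d
        exact hu2 (dvd_trans h2d (Nat.div_dvd_of_dvd hvu))
      have hfac : 2 ^ l * u = m * (u / v) := by
        rw [hmv, mul_assoc, Nat.mul_div_cancel' hvu]
      have hap2 : ∀ i, α (((2 ^ l * u : ℕ) : ZMod (2 * t)) + i) = -α i := by
        intro i
        have h1 := iter hap (u / v) i
        rw [hquod.neg_one_pow, neg_one_mul] at h1
        rw [hfac]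
        exact h1
      refine ⟨⟨⟨l, by omega⟩, fun r => decide (α ((r.val : ℕ) : ZMod (2 * t)) = 1)⟩, ?_⟩
      apply Subtype.ext
      simp only [hF]
      funext x
      set M := 2 ^ l * u with hMdef
      have hMpos : 0 < M := hM0 l
      set q := x.val / M with hqdef
      set r := x.val % M with hrdef
      have hrlt : r < M := Nat.mod_lt _ hMpos
      have hxdec : ((M * q + r : ℕ) : ZMod (2 * t)) = x := by
        rw [show M * q + r = x.val from Nat.div_add_mod x.val M]
        exact ZMod.natCast_zmod_val x
      have hαx : α x = (-1) ^ q * α ((r : ℕ) : ZMod (2 * t)) := by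
        rw [← hxdec]
        rw [show ((M * q + r : ℕ) : ZMod (2 * t))
          = ((M * q : ℕ) : ZMod (2 * t)) + ((r : ℕ) : ZMod (2 * t)) by push_cast; ring]
        exact iter hap2 q ((r : ℕ) : ZMod (2 * t))
      have hctor : ctor (n := 2 * t) M hMpos
          (fun s : Fin M => decide (α ((s.val : ℕ) : ZMod (2 * t)) = 1)) x
          = e (decide (α ((r : ℕ) : ZMod (2 * t)) = 1)) * (-1) ^ q := rfl
      rw [hctor, e_decide (hpm _), hαx]
      ring
  rw [← Nat.card_eq_of_bijective F hbij, Nat.card_eq_fintype_card,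
    Fintype.card_sigma]
  have hterm : ∀ l : Fin (a + 1),
      Fintype.card (Fin (2 ^ (l : ℕ) * u) → Bool) = 2 ^ (2 ^ (l : ℕ) * u) := by
    intro l
    simp [Fintype.card_fun]
  rw [Finset.sum_congr rfl (fun l _ => hterm l)]
  exact Fin.sum_univ_eq_sum_range (fun l => 2 ^ (2 ^ l * u)) (a + 1)
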